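/- Let (x^k) be generated by the augmented Lagrangian method (Algorithm 3.1) applied to the partially penalized GNEP, under Assumption 3.2 with (ε_k) bounded and ε'_k → 0, and let x̄ be a limit point of (x^k). If, for every player ν, the function h^ν satisfies CPLD_ν at x̄, then x̄ is a KKT point of the Feasibility GNEP, i.e. for every ν there exists w^ν ∈ ℝ^{p_ν} with ∇_{x^ν}‖g_+^ν(x̄)‖² + ∇_{x^ν}h^ν(x̄) w^ν = 0 and min{−h^ν(x̄), w^ν} = 0. -/

import Mathlib

open Filter Topology Finset Function RealInnerProductSpace

/-- The strategy space of a GNEP: one Euclidean block per player. -/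
abbrev Strat {N : ℕ} (n : Fin N → ℕ) := (ν : Fin N) → EuclideanSpace ℝ (Fin (n ν))

/-- Partial gradient of `f : Strat n → ℝ` with respect to player `ν`'s block at `x`. -/
noncomputable def pgrad {N : ℕ} {n : Fin N → ℕ} (ν : Fin N)
    (f : Strat n → ℝ) (x : Strat n) : EuclideanSpace ℝ (Fin (n ν)) :=
  gradient (fun z => f (Function.update x ν z)) (x ν)

/-- Positive linear dependence of a family on a finite index set. -/
def PosLinDep {ι E : Type*} [AddCommGroup E] [Module ℝ E]
    (s : Finset ι) (v : ι → E) : Prop :=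
  ∃ a : ι → ℝ, (∀ i, 0 ≤ a i) ∧ (∃ i ∈ s, a i ≠ 0) ∧ ∑ i ∈ s, a i • v i = 0

/-- Linear dependence of a family on a finite index set. -/
def LinDep {ι E : Type*} [AddCommGroup E] [Module ℝ E]
    (s : Finset ι) (v : ι → E) : Prop :=
  ∃ a : ι → ℝ, (∃ i ∈ s, a i ≠ 0) ∧ ∑ i ∈ s, a i • v i = 0

/-- CPLD with respect to player `ν`. -/
def CPLDnu {N : ℕ} {n : Fin N → ℕ} {ι : Type*} (ν : Fin N)
    (c : ι → Strat n → ℝ) (x : Strat n) : Prop :=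
  ∀ I : Finset ι, (∀ i ∈ I, c i x = 0) →
    PosLinDep I (fun i => pgrad ν (c i) x) →
    ∃ U ∈ 𝓝 x, ∀ y ∈ U, LinDep I (fun i => pgrad ν (c i) y)

/-- EMFCQ with respect to player `ν`. -/
def EMFCQnu {N : ℕ} {n : Fin N → ℕ} {ι : Type*} (ν : Fin N)
    (c : ι → Strat n → ℝ) (x : Strat n) : Prop :=
  ∃ d : EuclideanSpace ℝ (Fin (n ν)), ∀ i, 0 ≤ c i x → inner (𝕜 := ℝ) (pgrad ν (c i) x) d < 0


section helpers
variable {N : ℕ} {n : Fin N → ℕ}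

noncomputable def blockL (n : Fin N → ℕ) (ν : Fin N) :
    EuclideanSpace ℝ (Fin (n ν)) →L[ℝ] Strat n :=
  LinearMap.toContinuousLinearMap (LinearMap.single ℝ (fun ν => EuclideanSpace ℝ (Fin (n ν))) ν)

lemma blockL_apply (ν : Fin N) (z : EuclideanSpace ℝ (Fin (n ν))) :
    blockL n ν z = Pi.single ν z := rfl

lemma update_eq_add_blockL (ν : Fin N) (x : Strat n) (z : EuclideanSpace ℝ (Fin (n ν))) :
    Function.update x ν z = x + blockL n ν (z - x ν) := by
  funext i
  rcases eq_or_ne i ν with rfl | hi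
  · simp [blockL_apply]
  · simp [blockL_apply, Function.update_of_ne hi, Pi.single_eq_of_ne hi]

lemma hasFDerivAt_update_blk (ν : Fin N) (x : Strat n) :
    HasFDerivAt (fun z => Function.update x ν z) (blockL n ν) (x ν) := by
  have he : (fun z => Function.update x ν z)
      = fun z => x + blockL n ν (z - x ν) := funext (update_eq_add_blockL ν x)
  rw [he]
  have h1 : HasFDerivAt (fun z : EuclideanSpace ℝ (Fin (n ν)) => blockL n ν (z - x ν))
      (blockL n ν) (x ν) := by
    simpa using ((blockL n ν).hasFDerivAt.comp (x ν)
      ((hasFDerivAt_id (x ν)).sub_const (x ν)))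
  simpa using h1.const_add x

lemma pgrad_eq_of_hasFDerivAt {f : Strat n → ℝ} {ν : Fin N} {x : Strat n}
    {D : Strat n →L[ℝ] ℝ} (hf : HasFDerivAt f D x) :
    pgrad ν f x = (InnerProductSpace.toDual ℝ (EuclideanSpace ℝ (Fin (n ν)))).symm
      (D.comp (blockL n ν)) := by
  have hfx : HasFDerivAt f D (Function.update x ν (x ν)) := by
    rw [Function.update_eq_self]; exact hf
  have h1 : HasFDerivAt (fun z => f (Function.update x ν z)) (D.comp (blockL n ν)) (x ν) :=
    hfx.comp (x ν) (hasFDerivAt_update_blk ν x)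
  unfold pgrad gradient
  rw [h1.fderiv]

lemma pgrad_continuous {f : Strat n → ℝ} (hf : ContDiff ℝ 1 f) (ν : Fin N) :
    Continuous (pgrad ν f) := by
  have he : pgrad ν f = fun x => (InnerProductSpace.toDual ℝ (EuclideanSpace ℝ (Fin (n ν)))).symm
      ((ContinuousLinearMap.compL ℝ (EuclideanSpace ℝ (Fin (n ν))) (Strat n) ℝ).flip
        (blockL n ν) (fderiv ℝ f x)) := by
    funext x
    rw [pgrad_eq_of_hasFDerivAt ((hf.differentiable one_ne_zero x).hasFDerivAt)]
    rfl
  rw [he]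
  exact (LinearIsometryEquiv.continuous _).comp
    ((((ContinuousLinearMap.compL ℝ (EuclideanSpace ℝ (Fin (n ν))) (Strat n) ℝ).flip
      (blockL n ν)).continuous).comp (hf.continuous_fderiv one_ne_zero))

lemma hasDerivAt_maxsq (t : ℝ) : HasDerivAt (fun s : ℝ => max s 0 ^ 2) (2 * max t 0) t := by
  rcases lt_trichotomy t 0 with ht | rfl | ht
  · have h0 : HasDerivAt (fun _ : ℝ => (0:ℝ)) 0 t := hasDerivAt_const t 0
    have heq : (fun s : ℝ => max s 0 ^ 2) =ᶠ[𝓝 t] fun _ => (0:ℝ) := by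
      filter_upwards [Iio_mem_nhds ht] with s hs
      simp [max_eq_right (le_of_lt (Set.mem_Iio.mp hs))]
    have := h0.congr_of_eventuallyEq heq
    simpa [max_eq_right (le_of_lt ht)] using this
  · rw [hasDerivAt_iff_isLittleO, Asymptotics.isLittleO_iff]
    intro c hc
    filter_upwards [Metric.ball_mem_nhds (0:ℝ) hc] with s hs
    have h2 : |s| < c := by simpa [Real.dist_eq] using hs
    have h1 : |max s 0| ≤ |s| := by
      rcases le_or_gt s 0 with h | h
      · simp [max_eq_right h, abs_nonneg]
      · simp [max_eq_left h.le]
    simp only [max_self, mul_zero, smul_zero, sub_zero, zero_pow, ne_eq,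
      OfNat.ofNat_ne_zero, not_false_eq_true, Real.norm_eq_abs]
    rw [abs_pow, sq]
    nlinarith [abs_nonneg s, abs_nonneg (max s 0)]
  · have h0 : HasDerivAt (fun s : ℝ => s ^ 2) (2 * t) t := by
      simpa [mul_comm] using (hasDerivAt_pow 2 t)
    have heq : (fun s : ℝ => max s 0 ^ 2) =ᶠ[𝓝 t] fun s => s ^ 2 := by
      filter_upwards [Ioi_mem_nhds ht] with s hs
      simp [max_eq_left (le_of_lt (Set.mem_Ioi.mp hs))]
    have := h0.congr_of_eventuallyEq heq
    simpa [max_eq_left (le_of_lt ht)] using this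

lemma abs_le_sqrt_sum {ι : Type*} [Fintype ι] (f : ι → ℝ) (j : ι) :
    |f j| ≤ Real.sqrt (∑ i, f i ^ 2) := by
  rw [← Real.sqrt_sq_eq_abs]
  exact Real.sqrt_le_sqrt (Finset.single_le_sum (f := fun i => f i ^ 2)
    (fun i _ => sq_nonneg _) (Finset.mem_univ j))

section chain
variable {N : ℕ} {n : Fin N → ℕ}

lemma pgrad_sum_maxsq {ι : Type*} [Fintype ι] (g : ι → Strat n → ℝ)
    (hg : ∀ i, ContDiff ℝ 1 (g i)) (ν : Fin N) (x : Strat n) :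
    pgrad ν (fun y => ∑ i, max (g i y) 0 ^ 2) x
      = ∑ i, (2 * max (g i x) 0) • pgrad ν (g i) x := by
  have hD : ∀ i : ι, HasFDerivAt (fun y => max (g i y) 0 ^ 2)
      ((2 * max (g i x) 0) • fderiv ℝ (g i) x) x := fun i =>
    (hasDerivAt_maxsq (g i x)).comp_hasFDerivAt x ((hg i).differentiable one_ne_zero x).hasFDerivAt
  have hsum : HasFDerivAt (fun y => ∑ i, max (g i y) 0 ^ 2)
      (∑ i, (2 * max (g i x) 0) • fderiv ℝ (g i) x) x := by
    have := HasFDerivAt.sum (fun i (_ : i ∈ Finset.univ) => hD i)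
    simpa [Finset.sum_fn] using this
  rw [pgrad_eq_of_hasFDerivAt hsum]
  have hcomp : (∑ i, (2 * max (g i x) 0) • fderiv ℝ (g i) x).comp (blockL n ν)
      = ∑ i, (2 * max (g i x) 0) • ((fderiv ℝ (g i) x).comp (blockL n ν)) := by
    ext z
    simp [ContinuousLinearMap.sum_apply]
  rw [hcomp, map_sum]
  refine Finset.sum_congr rfl fun i _ => ?_
  rw [map_smul, pgrad_eq_of_hasFDerivAt ((hg i).differentiable one_ne_zero x).hasFDerivAt]

end chain

lemma li_not_linDep {ι E : Type*} [AddCommGroup E] [Module ℝ E]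
    (I : Finset ι) (v : ι → E)
    (hli : LinearIndependent ℝ (fun j : ↥I => v j)) : ¬ LinDep I v := by
  rintro ⟨a, ⟨i, hiI, hai⟩, hsum⟩
  have h0 : ∑ j : ↥I, a ↑j • v ↑j = 0 := by
    rw [Finset.sum_coe_sort I (fun j => a j • v j)]; exact hsum
  exact hai (Fintype.linearIndependent_iff.mp hli (fun j => a ↑j) h0 ⟨i, hiI⟩)

lemma conic_cara {E : Type*} [AddCommGroup E] [Module ℝ E] {ι : Type*} [DecidableEq ι]
    (A : Finset ι) (v : ι → E) (c : ι → ℝ) (hc : ∀ j ∈ A, 0 ≤ c j) :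
    ∃ I : Finset ι, I ⊆ A ∧ ∃ e : ι → ℝ, (∀ j, 0 ≤ e j) ∧ (∀ j ∉ I, e j = 0) ∧
      (∑ j ∈ I, e j • v j = ∑ j ∈ A, c j • v j) ∧
      LinearIndependent ℝ (fun j : ↥I => v j) := by
  induction A using Finset.strongInduction generalizing c with
  | _ A IH =>
  by_cases hli : LinearIndependent ℝ (fun j : ↥A => v j)
  · refine ⟨A, subset_rfl, fun j => if j ∈ A then c j else 0, ?_, ?_, ?_, hli⟩
    · intro j
      by_cases hj : j ∈ A
      · simpa [hj] using hc j hj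
      · simp [hj]
    · intro j hj; simp [hj]
    · exact Finset.sum_congr rfl fun j hj => by simp [hj]
  · obtain ⟨gg, hgsum, i0, hgi0⟩ := Fintype.not_linearIndependent_iff.mp hli
    set G : ι → ℝ := fun j => if hj : j ∈ A then gg ⟨j, hj⟩ else 0 with hGdef
    have hGsum : ∑ j ∈ A, G j • v j = 0 := by
      rw [← Finset.sum_coe_sort A (fun j => G j • v j)]
      rw [← hgsum]
      exact Finset.sum_congr rfl fun j _ => by simp [hGdef, j.2]
    have key : ∀ (G : ι → ℝ), (∑ j ∈ A, G j • v j = 0) → (∃ j ∈ A, 0 < G j) →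
        ∃ I : Finset ι, I ⊆ A ∧ ∃ e : ι → ℝ, (∀ j, 0 ≤ e j) ∧ (∀ j ∉ I, e j = 0) ∧
          (∑ j ∈ I, e j • v j = ∑ j ∈ A, c j • v j) ∧
          LinearIndependent ℝ (fun j : ↥I => v j) := by
      intro G hGsum hpos
      set P := A.filter (fun j => 0 < G j) with hP
      have hPne : P.Nonempty := by
        obtain ⟨j, hjA, hjG⟩ := hpos
        exact ⟨j, Finset.mem_filter.mpr ⟨hjA, hjG⟩⟩
      obtain ⟨j0, hj0P, hj0min⟩ := Finset.exists_min_image P (fun j => c j / G j) hPne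
      have hj0A : j0 ∈ A := (Finset.mem_filter.mp hj0P).1
      have hGj0 : 0 < G j0 := (Finset.mem_filter.mp hj0P).2
      set t := c j0 / G j0 with ht
      have ht0 : 0 ≤ t := div_nonneg (hc j0 hj0A) hGj0.le
      set c' : ι → ℝ := fun j => c j - t * G j with hc'
      have hc'nonneg : ∀ j ∈ A, 0 ≤ c' j := by
        intro j hjA
        rcases le_or_gt (G j) 0 with hGj | hGj
        · have : t * G j ≤ 0 := mul_nonpos_of_nonneg_of_nonpos ht0 hGj
          simp only [hc']; linarith [hc j hjA]
        · have hmin := hj0min j (Finset.mem_filter.mpr ⟨hjA, hGj⟩)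
          have : t * G j ≤ c j := by
            rw [← le_div_iff₀ hGj]; exact hmin
          simp only [hc']; linarith
      have hc'j0 : c' j0 = 0 := by
        simp only [hc', ht]; field_simp; ring
      have hsum' : ∑ j ∈ A, c' j • v j = ∑ j ∈ A, c j • v j := by
        have : ∀ j, c' j • v j = c j • v j - t • (G j • v j) := by
          intro j; simp only [hc', sub_smul, smul_smul]
        simp only [this, Finset.sum_sub_distrib, ← Finset.smul_sum, hGsum, smul_zero, sub_zero]
      have hAe : A.erase j0 ⊂ A := Finset.erase_ssubset hj0A
      obtain ⟨I, hIA, e, he0, heI, hesum, heli⟩ :=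
        IH (A.erase j0) hAe c' (fun j hj => hc'nonneg j (Finset.mem_of_mem_erase hj))
      refine ⟨I, hIA.trans (Finset.erase_subset _ _), e, he0, heI, ?_, heli⟩
      rw [hesum, Finset.sum_erase _ (by rw [hc'j0, zero_smul]), hsum']
    have hi0A : (↑i0 : ι) ∈ A := i0.2
    have hGi0 : G ↑i0 ≠ 0 := by simpa [hGdef, i0.2] using hgi0
    rcases lt_or_gt_of_ne hGi0 with hlt | hgt
    · refine key (fun j => -G j) ?_ ⟨↑i0, hi0A, by simpa using neg_pos.mpr hlt⟩
      simp only [neg_smul, Finset.sum_neg_distrib, hGsum, neg_zero]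
    · exact key G hGsum ⟨↑i0, hi0A, hgt⟩

set_option maxHeartbeats 1000000 in
lemma cpld_limit {N : ℕ} {n : Fin N → ℕ} {ι : Type*} [Fintype ι] [DecidableEq ι]
    (ν : Fin N) (c : ι → Strat n → ℝ)
    (hc : ∀ j, Continuous (pgrad ν (c j)))
    (xbar : Strat n) (A : Finset ι) (hA : ∀ j ∈ A, c j xbar = 0)
    (hCPLD : CPLDnu ν c xbar)
    (y : ℕ → Strat n) (hy : Tendsto y atTop (𝓝 xbar))
    (d : ℕ → ι → ℝ) (hd : ∀ l j, 0 ≤ d l j)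
    (v : EuclideanSpace ℝ (Fin (n ν)))
    (hlim : Tendsto (fun l => ∑ j ∈ A, d l j • pgrad ν (c j) (y l)) atTop (𝓝 v)) :
    ∃ s : ι → ℝ, (∀ j, 0 ≤ s j) ∧ (∀ j ∉ A, s j = 0) ∧
      ∑ j ∈ A, s j • pgrad ν (c j) xbar = v := by
  classical
  set V : ι → Strat n → EuclideanSpace ℝ (Fin (n ν)) := fun j z => pgrad ν (c j) z with hV
  have H : ∀ l, ∃ I : Finset ι, I ⊆ A ∧ ∃ e : ι → ℝ, (∀ j, 0 ≤ e j) ∧ (∀ j ∉ I, e j = 0) ∧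
      (∑ j ∈ I, e j • V j (y l) = ∑ j ∈ A, d l j • V j (y l)) ∧
      LinearIndependent ℝ (fun j : ↥I => V j (y l)) := fun l =>
    conic_cara A (fun j => V j (y l)) (d l) (fun j _ => hd l j)
  choose I hIA e he0 heI hesum heli using H
  obtain ⟨S, hS⟩ := Finite.exists_infinite_fiber I
  have hfreq : ∃ᶠ l in atTop, I l = S := by
    rw [Nat.frequently_atTop_iff_infinite]
    have := Set.infinite_coe_iff.mp hS
    convert this using 1
    ext; simp
  obtain ⟨φ1, hφ1mono, hφ1⟩ := Filter.extraction_of_frequently_atTop hfreq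
  have hSA : S ⊆ A := (hφ1 0) ▸ hIA (φ1 0)
  set Nl : ℕ → ℝ := fun l => 1 + ∑ j ∈ S, e (φ1 l) j with hNl
  have hNl1 : ∀ l, 1 ≤ Nl l := fun l =>
    le_add_of_nonneg_right (Finset.sum_nonneg fun j _ => he0 _ j)
  have hNlpos : ∀ l, 0 < Nl l := fun l => lt_of_lt_of_le one_pos (hNl1 l)
  set z : ℕ → ℝ × (ι → ℝ) :=
    fun l => ((Nl l)⁻¹, fun j => if j ∈ S then e (φ1 l) j / Nl l else 0) with hz
  have hzK : ∀ l, z l ∈ Set.Icc (0:ℝ) 1 ×ˢ Set.univ.pi (fun _ : ι => Set.Icc (0:ℝ) 1) := by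
    intro l
    constructor
    · exact ⟨inv_nonneg.mpr (hNlpos l).le, by rw [inv_le_one₀ (hNlpos l)]; exact hNl1 l⟩
    · intro j _
      by_cases hj : j ∈ S
      · simp only [hz, if_pos hj, Set.mem_Icc]
        refine ⟨div_nonneg (he0 _ j) (hNlpos l).le, ?_⟩
        rw [div_le_one (hNlpos l)]
        have := Finset.single_le_sum (f := fun j => e (φ1 l) j) (fun j _ => he0 _ j) hj
        simp only [hNl]; linarith
      · simp [hz, hj, zero_le_one]
  have hK : IsCompact (Set.Icc (0:ℝ) 1 ×ˢ Set.univ.pi (fun _ : ι => Set.Icc (0:ℝ) 1)) :=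
    isCompact_Icc.prod (isCompact_univ_pi fun _ => isCompact_Icc)
  obtain ⟨⟨α, w⟩, hmem, φ2, hφ2mono, hz2⟩ := hK.tendsto_subseq hzK
  set ψ : ℕ → ℕ := fun l => φ1 (φ2 l) with hψ
  have hψmono : StrictMono ψ := hφ1mono.comp hφ2mono
  have hIψ : ∀ l, I (ψ l) = S := fun l => hφ1 (φ2 l)
  have hfst : Tendsto (fun l => (z (φ2 l)).1) atTop (𝓝 α) :=
    (continuous_fst.tendsto (α, w)).comp hz2
  have hsnd : ∀ j, Tendsto (fun l => (z (φ2 l)).2 j) atTop (𝓝 (w j)) := fun j =>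
    ((continuous_apply j).tendsto w).comp ((continuous_snd.tendsto (α, w)).comp hz2)
  have hα0 : 0 ≤ α := hmem.1.1
  have hw0 : ∀ j, 0 ≤ w j := fun j => ((Set.mem_univ_pi.mp hmem.2) j).1
  have hsum1 : ∀ l, (z l).1 + ∑ j ∈ S, (z l).2 j = 1 := by
    intro l
    have h1 : ∑ j ∈ S, (z l).2 j = (∑ j ∈ S, e (φ1 l) j) / Nl l := by
      rw [Finset.sum_div]
      exact Finset.sum_congr rfl fun j hj => by simp [hz, if_pos hj]
    have hne : Nl l ≠ 0 := (hNlpos l).ne'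
    simp only [hz] at h1 ⊢
    rw [h1, inv_eq_one_div, ← add_div]
    rw [div_eq_one_iff_eq hne]
  have hEqA : α + ∑ j ∈ S, w j = 1 := by
    have h1 : Tendsto (fun l => (z (φ2 l)).1 + ∑ j ∈ S, (z (φ2 l)).2 j) atTop
        (𝓝 (α + ∑ j ∈ S, w j)) :=
      hfst.add (tendsto_finset_sum _ fun j _ => hsnd j)
    exact tendsto_nhds_unique (Tendsto.congr (fun l => hsum1 (φ2 l)) h1) tendsto_const_nhds
  have hyψ : Tendsto (fun l => y (ψ l)) atTop (𝓝 xbar) := hy.comp hψmono.tendsto_atTop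
  have hLHS : Tendsto (fun l => ∑ j ∈ S, (z (φ2 l)).2 j • V j (y (ψ l))) atTop
      (𝓝 (∑ j ∈ S, w j • V j xbar)) :=
    tendsto_finset_sum _ fun j _ => (hsnd j).smul (((hc j).tendsto xbar).comp hyψ)
  have hRHS : Tendsto (fun l => (z (φ2 l)).1 • (∑ j ∈ A, d (ψ l) j • V j (y (ψ l)))) atTop
      (𝓝 (α • v)) := hfst.smul (hlim.comp hψmono.tendsto_atTop)
  have hEqSeq : ∀ l, ∑ j ∈ S, (z (φ2 l)).2 j • V j (y (ψ l))
      = (z (φ2 l)).1 • (∑ j ∈ A, d (ψ l) j • V j (y (ψ l))) := by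
    intro l
    have h1 : ∑ j ∈ S, (z (φ2 l)).2 j • V j (y (ψ l))
        = (Nl (φ2 l))⁻¹ • ∑ j ∈ S, e (ψ l) j • V j (y (ψ l)) := by
      rw [Finset.smul_sum]
      refine Finset.sum_congr rfl fun j hj => ?_
      simp only [hz, if_pos hj, hψ]
      rw [div_eq_inv_mul, mul_smul]
    have h2 := hesum (ψ l)
    rw [hIψ l] at h2
    rw [h1, h2]
  have hEqB : ∑ j ∈ S, w j • V j xbar = α • v := by
    refine tendsto_nhds_unique ?_ hRHS
    exact Tendsto.congr (fun l => hEqSeq l) hLHS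
  rcases eq_or_lt_of_le hα0 with hα | hα
  · exfalso
    have hsumw : ∑ j ∈ S, w j = 1 := by rw [← hα] at hEqA; linarith
    have hwne : ∃ j ∈ S, w j ≠ 0 := by
      by_contra hno
      push_neg at hno
      rw [Finset.sum_eq_zero hno] at hsumw
      exact one_ne_zero hsumw.symm
    have hPLD : PosLinDep S (fun j => V j xbar) :=
      ⟨w, hw0, hwne, by rw [hEqB, ← hα, zero_smul]⟩
    obtain ⟨U, hU, hLD⟩ := hCPLD S (fun j hj => hA j (hSA hj)) hPLD
    have hev : ∀ᶠ l in atTop, y (ψ l) ∈ U := hyψ hU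
    obtain ⟨l, hl⟩ := hev.exists
    have hld := hLD _ hl
    have hli := heli (ψ l)
    rw [hIψ l] at hli
    exact li_not_linDep S (fun j => pgrad ν (c j) (y (ψ l))) hli hld
  · refine ⟨fun j => if j ∈ S then w j / α else 0, ?_, ?_, ?_⟩
    · intro j
      by_cases hj : j ∈ S
      · simp only [if_pos hj]
        exact div_nonneg (hw0 j) hα.le
      · simp [hj]
    · intro j hj
      have hjS : j ∉ S := fun h => hj (hSA h)
      simp [hjS]
    · have h1 : ∑ j ∈ A, (if j ∈ S then w j / α else 0) • V j xbar
          = ∑ j ∈ S, (w j / α) • V j xbar := by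
        rw [← Finset.sum_subset hSA (fun j _ hjS => by simp [hjS])]
        exact Finset.sum_congr rfl fun j hj => by rw [if_pos hj]
      rw [h1]
      have h2 : ∑ j ∈ S, (w j / α) • V j xbar = α⁻¹ • ∑ j ∈ S, w j • V j xbar := by
        rw [Finset.smul_sum]
        exact Finset.sum_congr rfl fun j hj => by rw [div_eq_inv_mul, mul_smul]
      rw [h2, hEqB, smul_smul, inv_mul_cancel₀ hα.ne', one_smul]

set_option maxHeartbeats 2000000 in
/-- **Corollary 4.2.** If each `h ν` satisfies CPLD with respect to player `ν`
at a limit point `xbar` of the augmented Lagrangian iterates, then `xbar` is a KKT point of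
the Feasibility GNEP. -/
theorem stmt10 {N : ℕ} {n m p : Fin N → ℕ}
    (θ : Fin N → Strat n → ℝ)
    (g : (ν : Fin N) → Fin (m ν) → Strat n → ℝ)
    (h : (ν : Fin N) → Fin (p ν) → Strat n → ℝ)
    (hθ : ∀ ν, ContDiff ℝ 1 (θ ν))
    (hg : ∀ ν i, ContDiff ℝ 1 (g ν i))
    (hh : ∀ ν j, ContDiff ℝ 1 (h ν j))
    (x : ℕ → Strat n)
    (lam : (k : ℕ) → (ν : Fin N) → Fin (m ν) → ℝ)
    (mu : (k : ℕ) → (ν : Fin N) → Fin (p ν) → ℝ)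
    (u : (k : ℕ) → (ν : Fin N) → Fin (m ν) → ℝ)
    (rho : ℕ → Fin N → ℝ)
    (umax : ℝ) (τ γ : Fin N → ℝ)
    (humax : 0 ≤ umax)
    (hτ : ∀ ν, τ ν ∈ Set.Ioo (0:ℝ) 1)
    (hγ : ∀ ν, 1 < γ ν)
    (hrho0 : ∀ ν, 0 < rho 0 ν)
    (hu0 : ∀ ν i, u 0 ν i ∈ Set.Icc 0 umax)
    (hlam : ∀ k ν i, lam (k+1) ν i = max (u k ν i + rho k ν * g ν i (x (k+1))) 0)
    (hu : ∀ k ν i, u (k+1) ν i = min (lam (k+1) ν i) umax)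
    (hrho : ∀ k ν,
      (Real.sqrt (∑ i, (min (-(g ν i (x (k+1)))) (lam (k+1) ν i)) ^ 2) ≤
          τ ν * Real.sqrt (∑ i, (min (-(g ν i (x k))) (lam k ν i)) ^ 2) →
        rho (k+1) ν = rho k ν) ∧
      (¬ (Real.sqrt (∑ i, (min (-(g ν i (x (k+1)))) (lam (k+1) ν i)) ^ 2) ≤
          τ ν * Real.sqrt (∑ i, (min (-(g ν i (x k))) (lam k ν i)) ^ 2)) →
        rho (k+1) ν = γ ν * rho k ν))
    (eps eps' : ℕ → ℝ)
    (heps0 : ∀ k, 0 ≤ eps k)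
    (heps'0 : ∀ k, 0 ≤ eps' k)
    (heps' : Tendsto eps' atTop (𝓝 0))
    (hA1 : ∀ k ν, ‖pgrad ν (θ ν) (x (k+1))
        + ∑ i, max (u k ν i + rho k ν * g ν i (x (k+1))) 0 • pgrad ν (g ν i) (x (k+1))
        + ∑ j, mu (k+1) ν j • pgrad ν (h ν j) (x (k+1))‖ ≤ eps k)
    (hA2 : ∀ k ν, Real.sqrt (∑ j, (min (-(h ν j (x (k+1)))) (mu (k+1) ν j)) ^ 2) ≤ eps' k)
    (hepsbd : ∃ M, ∀ k, eps k ≤ M)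
    (xbar : Strat n)
    (hclus : MapClusterPt xbar atTop x)
    (hCPLD : ∀ ν, CPLDnu ν (h ν) xbar) :
    ∀ ν, ∃ w : Fin (p ν) → ℝ,
      (pgrad ν (fun y => ∑ i, max (g ν i y) 0 ^ 2) xbar
        + ∑ j, w j • pgrad ν (h ν j) xbar = 0) ∧
      (∀ j, min (-(h ν j xbar)) (w j) = 0) := by
  intro ν
  classical
  obtain ⟨M, hM⟩ := hepsbd
  obtain ⟨φ, hφmono, hφ⟩ := TopologicalSpace.FirstCountableTopology.tendsto_subseq hclus
  set κ : ℕ → ℕ := fun l => φ (l + 1) - 1 with hκdef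
  have hφ1 : ∀ l, 1 ≤ φ (l + 1) := fun l =>
    le_trans (Nat.succ_le_succ (Nat.zero_le l)) hφmono.le_apply
  have hκ1 : ∀ l, κ l + 1 = φ (l + 1) := fun l => Nat.succ_pred_eq_of_pos (hφ1 l)
  have hκmono : StrictMono κ := by
    intro a b hab
    have h1 : φ (a + 1) < φ (b + 1) := hφmono (by omega)
    have h2 := hφ1 a
    simp only [hκdef]
    omega
  have hxκ : Tendsto (fun l => x (κ l + 1)) atTop (𝓝 xbar) := by
    have heq : ∀ l, x (κ l + 1) = (x ∘ φ) (l + 1) := fun l => by rw [hκ1 l]; rfl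
    rw [tendsto_congr heq]
    exact hφ.comp (tendsto_add_atTop_nat 1)
  have hκtop : Tendsto κ atTop atTop := hκmono.tendsto_atTop
  have hepsκ : Tendsto (fun l => eps' (κ l)) atTop (𝓝 0) := heps'.comp hκtop
  have hminh : ∀ l j, |min (-(h ν j (x (κ l + 1)))) (mu (κ l + 1) ν j)| ≤ eps' (κ l) := by
    intro l j
    exact le_trans
      (abs_le_sqrt_sum (fun j => min (-(h ν j (x (κ l + 1)))) (mu (κ l + 1) ν j)) j)
      (hA2 (κ l) ν)
  have hminh0 : ∀ j, Tendsto (fun l => min (-(h ν j (x (κ l + 1)))) (mu (κ l + 1) ν j))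
      atTop (𝓝 0) := fun j =>
    squeeze_zero_norm (fun l => by simpa [Real.norm_eq_abs] using hminh l j) hepsκ
  have hhcont : ∀ j, Tendsto (fun l => -(h ν j (x (κ l + 1)))) atTop (𝓝 (-(h ν j xbar))) :=
    fun j => (((hh ν j).continuous.tendsto xbar).comp hxκ).neg
  have hhbar : ∀ j, h ν j xbar ≤ 0 := by
    intro j
    have h0 : (0:ℝ) ≤ -(h ν j xbar) :=
      le_of_tendsto_of_tendsto' (hminh0 j) (hhcont j) (fun l => min_le_left _ _)
    linarith
  have hmu0 : ∀ j, h ν j xbar < 0 → Tendsto (fun l => mu (κ l + 1) ν j) atTop (𝓝 0) := by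
    intro j hj
    have hccpos : 0 < -(h ν j xbar) := by linarith
    have hev1 : ∀ᶠ l in atTop, -(h ν j xbar) / 2 ≤ -(h ν j (x (κ l + 1))) :=
      (hhcont j).eventually (eventually_ge_nhds (by linarith))
    have hev2 : ∀ᶠ l in atTop, eps' (κ l) < -(h ν j xbar) / 2 :=
      hepsκ.eventually (eventually_lt_nhds (by linarith))
    apply squeeze_zero_norm' ?_ hepsκ
    filter_upwards [hev1, hev2] with l h1 h2
    have hmin := hminh l j
    by_cases hcase : mu (κ l + 1) ν j ≤ -(h ν j (x (κ l + 1)))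
    · rw [min_eq_right hcase] at hmin
      simpa [Real.norm_eq_abs] using hmin
    · exfalso
      push_neg at hcase
      rw [min_eq_left hcase.le] at hmin
      have h3 : -(h ν j (x (κ l + 1))) ≤ |(-(h ν j (x (κ l + 1))))| := le_abs_self _
      linarith
  have hubd : ∀ k i, 0 ≤ u k ν i ∧ u k ν i ≤ umax := by
    intro k
    induction k with
    | zero => exact fun i => ⟨(hu0 ν i).1, (hu0 ν i).2⟩
    | succ k ih =>
      intro i
      rw [hu k ν i, hlam k ν i]
      exact ⟨le_min (le_max_right _ _) humax, min_le_right _ _⟩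
  have hρpos : ∀ k, 0 < rho k ν := by
    intro k
    induction k with
    | zero => exact hrho0 ν
    | succ k ih =>
      by_cases htest : Real.sqrt (∑ i, (min (-(g ν i (x (k+1)))) (lam (k+1) ν i)) ^ 2) ≤
          τ ν * Real.sqrt (∑ i, (min (-(g ν i (x k))) (lam k ν i)) ^ 2)
      · rw [(hrho k ν).1 htest]; exact ih
      · rw [(hrho k ν).2 htest]; exact mul_pos (lt_trans one_pos (hγ ν)) ih
  have hρmono : Monotone (fun k => rho k ν) := by
    apply monotone_nat_of_le_succ
    intro k
    by_cases htest : Real.sqrt (∑ i, (min (-(g ν i (x (k+1)))) (lam (k+1) ν i)) ^ 2) ≤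
        τ ν * Real.sqrt (∑ i, (min (-(g ν i (x k))) (lam k ν i)) ^ 2)
    · rw [(hrho k ν).1 htest]
    · rw [(hrho k ν).2 htest]
      exact le_mul_of_one_le_left (hρpos k).le (hγ ν).le
  by_cases hB : BddAbove (Set.range (fun k => rho k ν))
  · -- bounded penalty case
    set V : ℕ → ℝ := fun k => Real.sqrt (∑ i, (min (-(g ν i (x k))) (lam k ν i)) ^ 2) with hVdef
    have hFfin : {k | ¬ (V (k+1) ≤ τ ν * V k)}.Finite := by
      by_contra hinf
      have hinf : Set.Infinite {k | ¬ (V (k+1) ≤ τ ν * V k)} := hinf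
      have grow : ∀ M0 : ℕ, ∃ k, rho 0 ν * γ ν ^ M0 ≤ rho k ν := by
        intro M0
        induction M0 with
        | zero => exact ⟨0, by simp⟩
        | succ M0 ih =>
          obtain ⟨k, hk⟩ := ih
          obtain ⟨k', hk'F, hkk'⟩ := hinf.exists_gt k
          have h1 : rho k ν ≤ rho k' ν := hρmono hkk'.le
          have h2 : rho (k'+1) ν = γ ν * rho k' ν := (hrho k' ν).2 hk'F
          refine ⟨k'+1, ?_⟩
          rw [h2, pow_succ]
          have hγpos : (0:ℝ) < γ ν := lt_trans one_pos (hγ ν)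
          calc rho 0 ν * (γ ν ^ M0 * γ ν) = γ ν * (rho 0 ν * γ ν ^ M0) := by ring
          _ ≤ γ ν * rho k' ν :=
            mul_le_mul_of_nonneg_left (le_trans hk h1) hγpos.le
      obtain ⟨b, hb⟩ := hB
      have hbub : ∀ k, rho k ν ≤ b := fun k => hb (Set.mem_range_self k)
      have htop : Tendsto (fun M0 : ℕ => rho 0 ν * γ ν ^ M0) atTop atTop :=
        (tendsto_pow_atTop_atTop_of_one_lt (hγ ν)).const_mul_atTop (hrho0 ν)
      obtain ⟨M0, hM0⟩ := (htop.eventually_ge_atTop (b+1)).exists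
      obtain ⟨k, hk⟩ := grow M0
      linarith [hbub k]
    obtain ⟨K, hK⟩ := hFfin.bddAbove
    have htestK : ∀ k, K < k → V (k+1) ≤ τ ν * V k := by
      intro k hKk
      by_contra hcon
      exact absurd (hK hcon) (not_le.mpr hKk)
    have hVnonneg : ∀ k, 0 ≤ V k := fun k => Real.sqrt_nonneg _
    have hVbound : ∀ m0 : ℕ, V (K+1+m0) ≤ τ ν ^ m0 * V (K+1) := by
      intro m0
      induction m0 with
      | zero => simp
      | succ m0 ih =>
        have hstep := htestK (K+1+m0) (by omega)
        calc V (K+1+(m0+1)) = V ((K+1+m0)+1) := by rw [← Nat.add_assoc]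
        _ ≤ τ ν * V (K+1+m0) := hstep
        _ ≤ τ ν * (τ ν ^ m0 * V (K+1)) := mul_le_mul_of_nonneg_left ih (hτ ν).1.le
        _ = τ ν ^ (m0+1) * V (K+1) := by ring
    have hVtend : Tendsto V atTop (𝓝 0) := by
      rw [← tendsto_add_atTop_iff_nat (K+1)]
      apply squeeze_zero_norm (a := fun m0 => τ ν ^ m0 * V (K+1))
      · intro m0
        rw [Real.norm_eq_abs, abs_of_nonneg (hVnonneg _)]
        have := hVbound m0
        rwa [Nat.add_comm (K+1) m0] at this
      · have h1 : Tendsto (fun m0 : ℕ => τ ν ^ m0) atTop (𝓝 0) :=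
          tendsto_pow_atTop_nhds_zero_of_lt_one (hτ ν).1.le (hτ ν).2
        simpa using h1.mul_const (V (K+1))
    have hming0 : ∀ i, Tendsto (fun l => min (-(g ν i (x (κ l + 1)))) (lam (κ l + 1) ν i))
        atTop (𝓝 0) := by
      intro i
      apply squeeze_zero_norm (a := fun l => V (κ l + 1)) ?_
        (hVtend.comp ((tendsto_add_atTop_nat 1).comp hκtop))
      intro l
      rw [Real.norm_eq_abs]
      exact abs_le_sqrt_sum (fun i => min (-(g ν i (x (κ l + 1)))) (lam (κ l + 1) ν i)) i
    have hgbar : ∀ i, g ν i xbar ≤ 0 := by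
      intro i
      have hgc : Tendsto (fun l => -(g ν i (x (κ l + 1)))) atTop (𝓝 (-(g ν i xbar))) :=
        (((hg ν i).continuous.tendsto xbar).comp hxκ).neg
      have h0 : (0:ℝ) ≤ -(g ν i xbar) :=
        le_of_tendsto_of_tendsto' (hming0 i) hgc (fun l => min_le_left _ _)
      linarith
    refine ⟨fun _ => 0, ?_, ?_⟩
    · have h1 : pgrad ν (fun y => ∑ i, max (g ν i y) 0 ^ 2) xbar = 0 := by
        rw [pgrad_sum_maxsq (g ν) (hg ν) ν xbar]
        apply Finset.sum_eq_zero
        intro i _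
        rw [max_eq_right (hgbar i), mul_zero, zero_smul]
      rw [h1]
      simp
    · intro j
      rw [min_eq_right (by linarith [hhbar j] : (0:ℝ) ≤ -(h ν j xbar))]
  · -- unbounded penalty case
    have hρtop : Tendsto (fun k => rho k ν) atTop atTop :=
      tendsto_atTop_atTop_of_monotone' hρmono hB
    have hρκtop : Tendsto (fun l => rho (κ l) ν) atTop atTop := hρtop.comp hκtop
    have hρinv : Tendsto (fun l => (rho (κ l) ν)⁻¹) atTop (𝓝 0) :=
      tendsto_inv_atTop_zero.comp hρκtop
    have hpgθ : Continuous (pgrad ν (θ ν)) := pgrad_continuous (hθ ν) ν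
    have hpgg : ∀ i, Continuous (pgrad ν (g ν i)) := fun i => pgrad_continuous (hg ν i) ν
    have hpgh : ∀ j, Continuous (pgrad ν (h ν j)) := fun j => pgrad_continuous (hh ν j) ν
    set y : ℕ → Strat n := fun l => x (κ l + 1) with hydef
    set Gf : ℕ → EuclideanSpace ℝ (Fin (n ν)) := fun l =>
      pgrad ν (θ ν) (y l)
      + ∑ i, max (u (κ l) ν i + rho (κ l) ν * g ν i (y l)) 0 • pgrad ν (g ν i) (y l)
      + ∑ j, mu (κ l + 1) ν j • pgrad ν (h ν j) (y l) with hGf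
    have hGfbd : ∀ l, ‖Gf l‖ ≤ M := fun l => le_trans (hA1 (κ l) ν) (hM (κ l))
    have hρinvnn : ∀ l, (0:ℝ) ≤ (rho (κ l) ν)⁻¹ := fun l => inv_nonneg.mpr (hρpos (κ l)).le
    have hT : Tendsto (fun l => (rho (κ l) ν)⁻¹ • Gf l) atTop (𝓝 0) := by
      apply squeeze_zero_norm (a := fun l => (rho (κ l) ν)⁻¹ * M)
      · intro l
        rw [norm_smul, Real.norm_eq_abs, abs_of_nonneg (hρinvnn l)]
        exact mul_le_mul_of_nonneg_left (hGfbd l) (hρinvnn l)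
      · simpa using hρinv.mul_const M
    have hT0 : Tendsto (fun l => (rho (κ l) ν)⁻¹ • pgrad ν (θ ν) (y l)) atTop (𝓝 0) := by
      have := hρinv.smul ((hpgθ.tendsto xbar).comp hxκ)
      simpa using this
    have hcoefg : ∀ i, Tendsto
        (fun l => (rho (κ l) ν)⁻¹ * max (u (κ l) ν i + rho (κ l) ν * g ν i (y l)) 0)
        atTop (𝓝 (max (g ν i xbar) 0)) := by
      intro i
      have heq : ∀ l, (rho (κ l) ν)⁻¹ * max (u (κ l) ν i + rho (κ l) ν * g ν i (y l)) 0
          = max ((rho (κ l) ν)⁻¹ * u (κ l) ν i + g ν i (y l)) 0 := by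
        intro l
        rw [mul_max_of_nonneg _ _ (hρinvnn l), mul_zero, mul_add, ← mul_assoc,
          inv_mul_cancel₀ (hρpos (κ l)).ne', one_mul]
      rw [funext heq]
      have h1 : Tendsto (fun l => (rho (κ l) ν)⁻¹ * u (κ l) ν i) atTop (𝓝 0) := by
        apply squeeze_zero_norm (a := fun l => (rho (κ l) ν)⁻¹ * umax)
        · intro l
          rw [Real.norm_eq_abs, abs_mul, abs_of_nonneg (hρinvnn l),
            abs_of_nonneg (hubd (κ l) i).1]
          exact mul_le_mul_of_nonneg_left (hubd (κ l) i).2 (hρinvnn l)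
        · simpa using hρinv.mul_const umax
      have h2 : Tendsto (fun l => g ν i (y l)) atTop (𝓝 (g ν i xbar)) :=
        ((hg ν i).continuous.tendsto xbar).comp hxκ
      have := (h1.add h2).max (tendsto_const_nhds (x := (0:ℝ)))
      simpa using this
    set vhat : EuclideanSpace ℝ (Fin (n ν)) :=
      ∑ i, max (g ν i xbar) 0 • pgrad ν (g ν i) xbar with hvhat
    have hT1 : Tendsto (fun l => (rho (κ l) ν)⁻¹ •
        ∑ i, max (u (κ l) ν i + rho (κ l) ν * g ν i (y l)) 0 • pgrad ν (g ν i) (y l))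
        atTop (𝓝 vhat) := by
      have heq : ∀ l, (rho (κ l) ν)⁻¹ •
          ∑ i, max (u (κ l) ν i + rho (κ l) ν * g ν i (y l)) 0 • pgrad ν (g ν i) (y l)
          = ∑ i, ((rho (κ l) ν)⁻¹ * max (u (κ l) ν i + rho (κ l) ν * g ν i (y l)) 0) •
              pgrad ν (g ν i) (y l) := by
        intro l
        rw [Finset.smul_sum]
        exact Finset.sum_congr rfl fun i _ => by rw [mul_smul]
      rw [funext heq]
      exact tendsto_finset_sum _ fun i _ =>
        (hcoefg i).smul (((hpgg i).tendsto xbar).comp hxκ)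
    set W : ℕ → EuclideanSpace ℝ (Fin (n ν)) := fun l =>
      ∑ j, ((rho (κ l) ν)⁻¹ * mu (κ l + 1) ν j) • pgrad ν (h ν j) (y l) with hW
    have hWeq : ∀ l, W l = (rho (κ l) ν)⁻¹ • Gf l
        - (rho (κ l) ν)⁻¹ • pgrad ν (θ ν) (y l)
        - (rho (κ l) ν)⁻¹ •
            ∑ i, max (u (κ l) ν i + rho (κ l) ν * g ν i (y l)) 0 • pgrad ν (g ν i) (y l) := by
      intro l
      simp only [hGf, hW, smul_add]
      have hs2 : (rho (κ l) ν)⁻¹ • ∑ j, mu (κ l + 1) ν j • pgrad ν (h ν j) (y l)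
          = ∑ j, ((rho (κ l) ν)⁻¹ * mu (κ l + 1) ν j) • pgrad ν (h ν j) (y l) := by
        rw [Finset.smul_sum]
        exact Finset.sum_congr rfl fun j _ => (mul_smul _ _ _).symm
      rw [← hs2]
      abel
    have hWlim : Tendsto W atTop (𝓝 (-vhat)) := by
      have hcomb := (hT.sub hT0).sub hT1
      refine Tendsto.congr (fun l => (hWeq l).symm) ?_
      simpa using hcomb
    set A : Finset (Fin (p ν)) := Finset.univ.filter (fun j => h ν j xbar = 0) with hAdef
    have hWsplit : ∀ l, W l
        = (∑ j ∈ A, ((rho (κ l) ν)⁻¹ * mu (κ l + 1) ν j) • pgrad ν (h ν j) (y l))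
          + ∑ j ∈ Aᶜ, ((rho (κ l) ν)⁻¹ * mu (κ l + 1) ν j) • pgrad ν (h ν j) (y l) := by
      intro l
      rw [hW]
      exact (Finset.sum_add_sum_compl A _).symm
    have hWc0 : Tendsto (fun l =>
        ∑ j ∈ Aᶜ, ((rho (κ l) ν)⁻¹ * mu (κ l + 1) ν j) • pgrad ν (h ν j) (y l))
        atTop (𝓝 0) := by
      have hterm : ∀ j ∈ Aᶜ, Tendsto (fun l =>
          ((rho (κ l) ν)⁻¹ * mu (κ l + 1) ν j) • pgrad ν (h ν j) (y l)) atTop (𝓝 0) := by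
        intro j hj
        have hjne : ¬ (h ν j xbar = 0) := by
          have := Finset.mem_compl.mp hj
          simpa [hAdef] using this
        have hjneg : h ν j xbar < 0 := lt_of_le_of_ne (hhbar j) hjne
        have hmuj := hmu0 j hjneg
        have hcf : Tendsto (fun l => (rho (κ l) ν)⁻¹ * mu (κ l + 1) ν j) atTop (𝓝 0) := by
          apply squeeze_zero_norm (a := fun l => (rho 0 ν)⁻¹ * |mu (κ l + 1) ν j|)
          · intro l
            rw [Real.norm_eq_abs, abs_mul, abs_of_nonneg (hρinvnn l)]
            exact mul_le_mul_of_nonneg_right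
              (inv_anti₀ (hrho0 ν) (hρmono (Nat.zero_le (κ l)))) (abs_nonneg _)
          · have h1 : Tendsto (fun l => |mu (κ l + 1) ν j|) atTop (𝓝 0) := by
              simpa using hmuj.abs
            simpa using h1.const_mul ((rho 0 ν)⁻¹)
        have := hcf.smul (((hpgh j).tendsto xbar).comp hxκ)
        simpa using this
      have := tendsto_finset_sum Aᶜ hterm
      simpa using this
    have hWA : Tendsto (fun l =>
        ∑ j ∈ A, ((rho (κ l) ν)⁻¹ * mu (κ l + 1) ν j) • pgrad ν (h ν j) (y l))
        atTop (𝓝 (-vhat)) := by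
      have h1 := hWlim.sub hWc0
      refine Tendsto.congr (fun l => ?_) (by simpa using h1)
      rw [hWsplit l, add_sub_cancel_right]
    set dd : ℕ → Fin (p ν) → ℝ :=
      fun l j => max ((rho (κ l) ν)⁻¹ * mu (κ l + 1) ν j) 0 with hdd
    have hdd0 : ∀ l j, 0 ≤ dd l j := fun l j => le_max_right _ _
    have hdiff : Tendsto (fun l =>
        ∑ j ∈ A, (dd l j - (rho (κ l) ν)⁻¹ * mu (κ l + 1) ν j) • pgrad ν (h ν j) (y l))
        atTop (𝓝 0) := by
      have hterm : ∀ j ∈ A, Tendsto (fun l =>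
          (dd l j - (rho (κ l) ν)⁻¹ * mu (κ l + 1) ν j) • pgrad ν (h ν j) (y l))
          atTop (𝓝 0) := by
        intro j _
        have hco : Tendsto (fun l => dd l j - (rho (κ l) ν)⁻¹ * mu (κ l + 1) ν j)
            atTop (𝓝 0) := by
          apply squeeze_zero_norm (a := fun l => (rho 0 ν)⁻¹ * eps' (κ l))
          · intro l
            have hmu_lb : -(eps' (κ l)) ≤ mu (κ l + 1) ν j := by
              have h1 := (abs_le.mp (hminh l j)).1
              have h2 : min (-(h ν j (x (κ l + 1)))) (mu (κ l + 1) ν j) ≤ mu (κ l + 1) ν j :=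
                min_le_right _ _
              linarith
            have h4 : (rho (κ l) ν)⁻¹ * (-(eps' (κ l)))
                ≤ (rho (κ l) ν)⁻¹ * mu (κ l + 1) ν j :=
              mul_le_mul_of_nonneg_left hmu_lb (hρinvnn l)
            have h5 : (rho (κ l) ν)⁻¹ ≤ (rho 0 ν)⁻¹ :=
              inv_anti₀ (hrho0 ν) (hρmono (Nat.zero_le (κ l)))
            have h6 : (rho (κ l) ν)⁻¹ * eps' (κ l) ≤ (rho 0 ν)⁻¹ * eps' (κ l) :=
              mul_le_mul_of_nonneg_right h5 (heps'0 (κ l))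
            rw [Real.norm_eq_abs]
            rcases le_or_gt 0 ((rho (κ l) ν)⁻¹ * mu (κ l + 1) ν j) with hc | hc
            · have : dd l j - (rho (κ l) ν)⁻¹ * mu (κ l + 1) ν j = 0 := by
                simp only [hdd]
                rw [max_eq_left hc, sub_self]
              rw [this, abs_zero]
              exact mul_nonneg (inv_nonneg.mpr (hrho0 ν).le) (heps'0 (κ l))
            · have : dd l j - (rho (κ l) ν)⁻¹ * mu (κ l + 1) ν j
                  = -((rho (κ l) ν)⁻¹ * mu (κ l + 1) ν j) := by
                simp only [hdd]
                rw [max_eq_right hc.le, zero_sub]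
              rw [this, abs_neg, abs_of_neg hc]
              have := mul_neg ((rho (κ l) ν)⁻¹) (eps' (κ l))
              nlinarith [h4, h6]
          · simpa using hepsκ.const_mul ((rho 0 ν)⁻¹)
        have := hco.smul (((hpgh j).tendsto xbar).comp hxκ)
        simpa using this
      have := tendsto_finset_sum A hterm
      simpa using this
    have hDlim : Tendsto (fun l => ∑ j ∈ A, dd l j • pgrad ν (h ν j) (y l))
        atTop (𝓝 (-vhat)) := by
      have heq : ∀ l, ∑ j ∈ A, dd l j • pgrad ν (h ν j) (y l)
          = (∑ j ∈ A, ((rho (κ l) ν)⁻¹ * mu (κ l + 1) ν j) • pgrad ν (h ν j) (y l))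
            + ∑ j ∈ A, (dd l j - (rho (κ l) ν)⁻¹ * mu (κ l + 1) ν j) • pgrad ν (h ν j) (y l) := by
        intro l
        rw [← Finset.sum_add_distrib]
        refine Finset.sum_congr rfl fun j _ => ?_
        rw [← add_smul]
        congr 1
        ring
      refine Tendsto.congr (fun l => (heq l).symm) ?_
      simpa using hWA.add hdiff
    obtain ⟨s, hs0, hsA, hssum⟩ := cpld_limit ν (h ν) hpgh xbar A
      (fun j hj => (Finset.mem_filter.mp hj).2) (hCPLD ν) y hxκ dd hdd0 (-vhat) hDlim
    refine ⟨fun j => 2 * s j, ?_, ?_⟩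
    · rw [pgrad_sum_maxsq (g ν) (hg ν) ν xbar]
      have h1 : ∑ j, (2 * s j) • pgrad ν (h ν j) xbar
          = (2:ℝ) • ∑ j ∈ A, s j • pgrad ν (h ν j) xbar := by
        rw [Finset.smul_sum]
        rw [← Finset.sum_subset (Finset.subset_univ A)
          (fun j _ hjA => by rw [hsA j hjA, mul_zero, zero_smul])]
        exact Finset.sum_congr rfl fun j _ => by rw [smul_smul]
      rw [h1, hssum]
      have h2 : ∑ i, (2 * max (g ν i xbar) 0) • pgrad ν (g ν i) xbar = (2:ℝ) • vhat := by
        rw [hvhat, Finset.smul_sum]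
        exact Finset.sum_congr rfl fun i _ => by rw [smul_smul]
      rw [h2, smul_neg]
      exact add_neg_cancel _
    · intro j
      show min (-(h ν j xbar)) (2 * s j) = 0
      by_cases hjA : j ∈ A
      · have hj0 : h ν j xbar = 0 := (Finset.mem_filter.mp hjA).2
        rw [hj0, neg_zero]
        exact min_eq_left (by linarith [hs0 j])
      · rw [hsA j hjA, mul_zero]
        exact min_eq_right (by linarith [hhbar j])
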